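/- Let m ≥ 1 and s ≥ 0 be integers, let 1 ≤ k_1 < k_2 < ⋯ < k_s ≤ m+s be integers, and let q be a real number with 0 < q < 1. Let E := {2, 4, …, 2m+2s} and O := {1, 3, …, 2m+2s+1} be the sets of even and odd numbers in [2m+2s+1], and set C := E ∖ {2k_1, …, 2k_s} and D := O ∪ {2k_1, …, 2k_s}. Then ▲(C) · ▲(D) = ▲(E) · ▲(O) · ∏_{1≤i<j≤s} (q^{2k_j} − q^{2k_i})² · ∏_{i=1}^{s} q^{3k_i} · (q−1)² · (q³;q²)_{k_i−1} · (q³;q²)_{m+s−k_i} / ((q²;q²)_{k_i−1} · (q²;q²)_{m+s−k_i}). -/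

import Mathlib

open scoped Classical

/-- The shifted q-factorial `(a;q)_k = (1-a)(1-aq)⋯(1-aq^{k-1})`. -/
noncomputable def qPoch (a q : ℝ) (k : ℕ) : ℝ := ∏ i ∈ Finset.range k, (1 - a * q ^ i)

/-- `▲(U) = ∏_{u < v in U} (q^v - q^u)`. -/
noncomputable def vand (q : ℝ) (U : Finset ℕ) : ℝ :=
  ∏ u ∈ U, ∏ v ∈ U.filter (fun v => u < v), (q ^ v - q ^ u)

lemma qPoch_pos {a Q : ℝ} (ha0 : 0 ≤ a) (ha1 : a < 1) (hQ0 : 0 ≤ Q) (hQ1 : Q ≤ 1)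
    (n : ℕ) : 0 < qPoch a Q n := by
  refine Finset.prod_pos fun i _ => ?_
  have h1 : Q ^ i ≤ 1 := pow_le_one₀ hQ0 hQ1
  have h2 : 0 ≤ Q ^ i := pow_nonneg hQ0 i
  nlinarith

lemma qPoch_succ (a Q : ℝ) (t : ℕ) : qPoch a Q (t + 1) = (1 - a) * qPoch (a * Q) Q t := by
  unfold qPoch
  rw [Finset.prod_range_succ', pow_zero, mul_one]
  rw [mul_comm]
  congr 1
  refine Finset.prod_congr rfl fun i _ => ?_
  rw [pow_succ']
  ring

lemma prod_pow_sub_one (q : ℝ) (d c N : ℕ) :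
    ∏ i ∈ Finset.range N, (q ^ (d + c * i) - 1) = (-1) ^ N * qPoch (q ^ d) (q ^ c) N := by
  unfold qPoch
  calc ∏ i ∈ Finset.range N, (q ^ (d + c * i) - 1)
      = ∏ i ∈ Finset.range N, ((-1) * (1 - q ^ d * (q ^ c) ^ i)) := by
        refine Finset.prod_congr rfl fun i _ => ?_
        rw [← pow_mul, ← pow_add]
        ring
    _ = (-1) ^ N * ∏ i ∈ Finset.range N, (1 - q ^ d * (q ^ c) ^ i) := by
        rw [Finset.prod_mul_distrib, Finset.prod_const, Finset.card_range]

lemma prod_above (q : ℝ) (a d c N : ℕ) :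
    ∏ i ∈ Finset.range N, (q ^ (a + (d + c * i)) - q ^ a)
      = q ^ (a * N) * ((-1) ^ N * qPoch (q ^ d) (q ^ c) N) := by
  calc ∏ i ∈ Finset.range N, (q ^ (a + (d + c * i)) - q ^ a)
      = ∏ i ∈ Finset.range N, (q ^ a * (q ^ (d + c * i) - 1)) := by
        refine Finset.prod_congr rfl fun i _ => ?_
        rw [pow_add]; ring
    _ = (q ^ a) ^ N * ∏ i ∈ Finset.range N, (q ^ (d + c * i) - 1) := by
        rw [Finset.prod_mul_distrib, Finset.prod_const, Finset.card_range]
    _ = q ^ (a * N) * ((-1) ^ N * qPoch (q ^ d) (q ^ c) N) := by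
        rw [prod_pow_sub_one, ← pow_mul]

lemma sum_odd (N : ℕ) : ∑ i ∈ Finset.range N, (2 * i + 1) = N ^ 2 := by
  induction N with
  | zero => simp
  | succ n ih => rw [Finset.sum_range_succ, ih]; ring

lemma sum_even (N : ℕ) : ∑ i ∈ Finset.range N, (2 * i + 2) = N ^ 2 + N := by
  induction N with
  | zero => simp
  | succ n ih => rw [Finset.sum_range_succ, ih]; ring

lemma below_odd (q : ℝ) (N : ℕ) :
    ∏ i ∈ Finset.range N, (q ^ (2 * N) - q ^ (2 * i + 1))
      = q ^ (N ^ 2) * ((-1) ^ N * qPoch q (q ^ 2) N) := by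
  calc ∏ i ∈ Finset.range N, (q ^ (2 * N) - q ^ (2 * i + 1))
      = ∏ i ∈ Finset.range N, (q ^ (2 * i + 1) * (q ^ (1 + 2 * (N - 1 - i)) - 1)) := by
        refine Finset.prod_congr rfl fun i hi => ?_
        have hi' : i < N := Finset.mem_range.mp hi
        have h : (2 * i + 1) + (1 + 2 * (N - 1 - i)) = 2 * N := by omega
        rw [← h, pow_add]; ring
    _ = q ^ (N ^ 2) * ∏ i ∈ Finset.range N, (q ^ (1 + 2 * (N - 1 - i)) - 1) := by
        rw [Finset.prod_mul_distrib, Finset.prod_pow_eq_pow_sum, sum_odd]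
    _ = q ^ (N ^ 2) * ((-1) ^ N * qPoch q (q ^ 2) N) := by
        congr 1
        have hrefl := Finset.prod_range_reflect (fun i => q ^ (1 + 2 * i) - 1) N
        rw [hrefl, prod_pow_sub_one, pow_one]

lemma below_even (q : ℝ) (N : ℕ) :
    ∏ i ∈ Finset.range N, (q ^ (2 * N + 2) - q ^ (2 * i + 2))
      = q ^ (N ^ 2 + N) * ((-1) ^ N * qPoch (q ^ 2) (q ^ 2) N) := by
  calc ∏ i ∈ Finset.range N, (q ^ (2 * N + 2) - q ^ (2 * i + 2))
      = ∏ i ∈ Finset.range N, (q ^ (2 * i + 2) * (q ^ (2 + 2 * (N - 1 - i)) - 1)) := by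
        refine Finset.prod_congr rfl fun i hi => ?_
        have hi' : i < N := Finset.mem_range.mp hi
        have h : (2 * i + 2) + (2 + 2 * (N - 1 - i)) = 2 * N + 2 := by omega
        rw [← h, pow_add]; ring
    _ = q ^ (N ^ 2 + N) * ∏ i ∈ Finset.range N, (q ^ (2 + 2 * (N - 1 - i)) - 1) := by
        rw [Finset.prod_mul_distrib, Finset.prod_pow_eq_pow_sum, sum_even]
    _ = q ^ (N ^ 2 + N) * ((-1) ^ N * qPoch (q ^ 2) (q ^ 2) N) := by
        congr 1
        have hrefl := Finset.prod_range_reflect (fun i => q ^ (2 + 2 * i) - 1) N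
        rw [hrefl, prod_pow_sub_one]

lemma Icc_eq_image (a N : ℕ) :
    Finset.Icc (a + 1) (a + N) = (Finset.range N).image (· + (a + 1)) := by
  ext x
  simp only [Finset.mem_Icc, Finset.mem_image, Finset.mem_range]
  constructor
  · rintro ⟨h1, h2⟩; exact ⟨x - (a + 1), by omega, by omega⟩
  · rintro ⟨i, hi, rfl⟩; omega

lemma key1 (q : ℝ) (n kk : ℕ) (hk1 : 1 ≤ kk) (hkn : kk ≤ n) :
    ∏ u ∈ (Finset.Icc 1 (n + 1)).image (fun i => 2 * i - 1),
        (q ^ (max u (2 * kk)) - q ^ (min u (2 * kk)))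
      = (-1) ^ (n + 1) * q ^ (kk ^ 2 + 2 * kk * (n + 1 - kk)) *
        (qPoch q (q ^ 2) kk * qPoch q (q ^ 2) (n + 1 - kk)) := by
  rw [Finset.prod_image (by
    intro x hx y hy h
    have hx' := Finset.mem_Icc.mp hx
    have hy' := Finset.mem_Icc.mp hy
    simp only at h
    omega)]
  have hsplit : Finset.Icc 1 (n + 1) = Finset.Icc 1 kk ∪ Finset.Icc (kk + 1) (n + 1) := by
    ext x; simp only [Finset.mem_Icc, Finset.mem_union]; omega
  have hdisj : Disjoint (Finset.Icc 1 kk) (Finset.Icc (kk + 1) (n + 1)) := by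
    simp only [Finset.disjoint_left, Finset.mem_Icc]
    intro x hx hx'; omega
  rw [hsplit, Finset.prod_union hdisj]
  have e1 : Finset.Icc 1 kk = (Finset.range kk).image (· + (0 + 1)) := by
    have := Icc_eq_image 0 kk; simpa using this
  have e2 : Finset.Icc (kk + 1) (n + 1) = (Finset.range (n + 1 - kk)).image (· + (kk + 1)) := by
    have := Icc_eq_image kk (n + 1 - kk)
    have h : kk + (n + 1 - kk) = n + 1 := by omega
    rwa [h] at this
  have p1 : ∏ i ∈ Finset.Icc 1 kk,
      (q ^ (max (2 * i - 1) (2 * kk)) - q ^ (min (2 * i - 1) (2 * kk)))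
      = q ^ (kk ^ 2) * ((-1) ^ kk * qPoch q (q ^ 2) kk) := by
    rw [e1, Finset.prod_image (by intro x _ y _ h; simp only at h; omega)]
    rw [← below_odd q kk]
    refine Finset.prod_congr rfl fun i hi => ?_
    have hi' : i < kk := Finset.mem_range.mp hi
    have h1 : max (2 * (i + (0 + 1)) - 1) (2 * kk) = 2 * kk := by omega
    have h2 : min (2 * (i + (0 + 1)) - 1) (2 * kk) = 2 * i + 1 := by omega
    rw [h1, h2]
  have p2 : ∏ i ∈ Finset.Icc (kk + 1) (n + 1),
      (q ^ (max (2 * i - 1) (2 * kk)) - q ^ (min (2 * i - 1) (2 * kk)))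
      = q ^ (2 * kk * (n + 1 - kk)) * ((-1) ^ (n + 1 - kk) * qPoch q (q ^ 2) (n + 1 - kk)) := by
    rw [e2, Finset.prod_image (by intro x _ y _ h; simp only at h; omega)]
    have := prod_above q (2 * kk) 1 2 (n + 1 - kk)
    rw [pow_one] at this
    rw [← this]
    refine Finset.prod_congr rfl fun i hi => ?_
    have h1 : max (2 * (i + (kk + 1)) - 1) (2 * kk) = 2 * kk + (1 + 2 * i) := by omega
    have h2 : min (2 * (i + (kk + 1)) - 1) (2 * kk) = 2 * kk := by omega
    rw [h1, h2]
  rw [p1, p2]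
  have hs : ((-1 : ℝ)) ^ kk * (-1) ^ (n + 1 - kk) = (-1) ^ (n + 1) := by
    rw [← pow_add]; congr 1; omega
  have hp : (q : ℝ) ^ (kk ^ 2) * q ^ (2 * kk * (n + 1 - kk)) = q ^ (kk ^ 2 + 2 * kk * (n + 1 - kk)) := by
    rw [← pow_add]
  rw [← hs, ← hp]; ring

lemma key2 (q : ℝ) (n kk : ℕ) (hk1 : 1 ≤ kk) (hkn : kk ≤ n) :
    ∏ u ∈ ((Finset.Icc 1 n).image (fun i => 2 * i)).erase (2 * kk),
        (q ^ (max u (2 * kk)) - q ^ (min u (2 * kk)))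
      = (-1) ^ (n - 1) * q ^ (kk * (kk - 1) + 2 * kk * (n - kk)) *
        (qPoch (q ^ 2) (q ^ 2) (kk - 1) * qPoch (q ^ 2) (q ^ 2) (n - kk)) := by
  have hinj : Function.Injective (fun i : ℕ => 2 * i) := fun a b h => by
    simp only at h; omega
  rw [← Finset.image_erase hinj]
  rw [Finset.prod_image (fun x _ y _ h => hinj h)]
  have hsplit : (Finset.Icc 1 n).erase kk = Finset.Icc 1 (kk - 1) ∪ Finset.Icc (kk + 1) n := by
    ext x; simp only [Finset.mem_Icc, Finset.mem_union, Finset.mem_erase]; omega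
  have hdisj : Disjoint (Finset.Icc 1 (kk - 1)) (Finset.Icc (kk + 1) n) := by
    simp only [Finset.disjoint_left, Finset.mem_Icc]
    intro x hx hx'; omega
  rw [hsplit, Finset.prod_union hdisj]
  have e1 : Finset.Icc 1 (kk - 1) = (Finset.range (kk - 1)).image (· + (0 + 1)) := by
    have := Icc_eq_image 0 (kk - 1); simpa using this
  have e2 : Finset.Icc (kk + 1) n = (Finset.range (n - kk)).image (· + (kk + 1)) := by
    have := Icc_eq_image kk (n - kk)
    have h : kk + (n - kk) = n := by omega
    rwa [h] at this
  have p1 : ∏ i ∈ Finset.Icc 1 (kk - 1),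
      (q ^ (max (2 * i) (2 * kk)) - q ^ (min (2 * i) (2 * kk)))
      = q ^ ((kk - 1) ^ 2 + (kk - 1)) * ((-1) ^ (kk - 1) * qPoch (q ^ 2) (q ^ 2) (kk - 1)) := by
    rw [e1, Finset.prod_image (by intro x _ y _ h; simp only at h; omega)]
    rw [← below_even q (kk - 1)]
    refine Finset.prod_congr rfl fun i hi => ?_
    have hi' : i < kk - 1 := Finset.mem_range.mp hi
    have h1 : max (2 * (i + (0 + 1))) (2 * kk) = 2 * (kk - 1) + 2 := by omega
    have h2 : min (2 * (i + (0 + 1))) (2 * kk) = 2 * i + 2 := by omega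
    rw [h1, h2]
  have p2 : ∏ i ∈ Finset.Icc (kk + 1) n,
      (q ^ (max (2 * i) (2 * kk)) - q ^ (min (2 * i) (2 * kk)))
      = q ^ (2 * kk * (n - kk)) * ((-1) ^ (n - kk) * qPoch (q ^ 2) (q ^ 2) (n - kk)) := by
    rw [e2, Finset.prod_image (by intro x _ y _ h; simp only at h; omega)]
    have := prod_above q (2 * kk) 2 2 (n - kk)
    rw [← this]
    refine Finset.prod_congr rfl fun i hi => ?_
    have h1 : max (2 * (i + (kk + 1))) (2 * kk) = 2 * kk + (2 + 2 * i) := by omega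
    have h2 : min (2 * (i + (kk + 1))) (2 * kk) = 2 * kk := by omega
    rw [h1, h2]
  rw [p1, p2]
  have hs : ((-1 : ℝ)) ^ (kk - 1) * (-1) ^ (n - kk) = (-1) ^ (n - 1) := by
    rw [← pow_add]; congr 1; omega
  have hp : (q : ℝ) ^ ((kk - 1) ^ 2 + (kk - 1)) * q ^ (2 * kk * (n - kk))
      = q ^ (kk * (kk - 1) + 2 * kk * (n - kk)) := by
    rw [← pow_add]; congr 1
    obtain ⟨a, rfl⟩ : ∃ a, kk = a + 1 := ⟨kk - 1, by omega⟩
    simp only [Nat.add_sub_cancel]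
    ring
  rw [← hs, ← hp]; ring

lemma alg (q : ℝ) (hq0 : 0 < q) (hq1 : q < 1) (n kk : ℕ) (hk1 : 1 ≤ kk) (hkn : kk ≤ n) :
    (-1 : ℝ) ^ (n + 1) * q ^ (kk ^ 2 + 2 * kk * (n + 1 - kk)) *
        (qPoch q (q ^ 2) kk * qPoch q (q ^ 2) (n + 1 - kk))
      = (-1) ^ (n - 1) * q ^ (kk * (kk - 1) + 2 * kk * (n - kk)) *
        (qPoch (q ^ 2) (q ^ 2) (kk - 1) * qPoch (q ^ 2) (q ^ 2) (n - kk)) *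
        (q ^ (3 * kk) * (q - 1) ^ 2 * qPoch (q ^ 3) (q ^ 2) (kk - 1) *
          qPoch (q ^ 3) (q ^ 2) (n - kk) /
          (qPoch (q ^ 2) (q ^ 2) (kk - 1) * qPoch (q ^ 2) (q ^ 2) (n - kk))) := by
  have hq2a : (0 : ℝ) ≤ q ^ 2 := by positivity
  have hq2b : q ^ 2 < 1 := by nlinarith
  have hq2c : q ^ 2 ≤ 1 := le_of_lt hq2b
  obtain ⟨a, rfl⟩ : ∃ a, kk = a + 1 := ⟨kk - 1, by omega⟩
  obtain ⟨b, rfl⟩ : ∃ b, n = a + 1 + b := ⟨n - (a + 1), by omega⟩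
  have h1 : a + 1 + b + 1 - (a + 1) = b + 1 := by omega
  have h2 : a + 1 + b - (a + 1) = b := by omega
  have h3 : a + 1 - 1 = a := by omega
  have h4 : a + 1 + b - 1 = a + b := by omega
  have h5 : a + 1 + b + 1 = a + b + 2 := by omega
  rw [h1, h2, h3, h4, h5]
  have hcube : q * q ^ 2 = q ^ 3 := by ring
  have e1 : qPoch q (q ^ 2) (a + 1) = (1 - q) * qPoch (q ^ 3) (q ^ 2) a := by
    rw [qPoch_succ, hcube]
  have e2 : qPoch q (q ^ 2) (b + 1) = (1 - q) * qPoch (q ^ 3) (q ^ 2) b := by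
    rw [qPoch_succ, hcube]
  have hda : qPoch (q ^ 2) (q ^ 2) a ≠ 0 := ne_of_gt (qPoch_pos hq2a hq2b hq2a hq2c a)
  have hdb : qPoch (q ^ 2) (q ^ 2) b ≠ 0 := ne_of_gt (qPoch_pos hq2a hq2b hq2a hq2c b)
  rw [e1, e2]
  field_simp
  ring

lemma vand_union (q : ℝ) (A B : Finset ℕ) (h : Disjoint A B) :
    vand q (A ∪ B) = vand q A * vand q B *
      ∏ b ∈ B, ∏ a ∈ A, (q ^ (max a b) - q ^ (min a b)) := by
  unfold vand
  rw [Finset.prod_union h]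
  have step : ∀ C : Finset ℕ,
      (∏ u ∈ C, ∏ v ∈ (A ∪ B).filter (fun v => u < v), (q ^ v - q ^ u))
      = (∏ u ∈ C, ∏ v ∈ A.filter (fun v => u < v), (q ^ v - q ^ u)) *
        (∏ u ∈ C, ∏ v ∈ B.filter (fun v => u < v), (q ^ v - q ^ u)) := by
    intro C
    rw [← Finset.prod_mul_distrib]
    refine Finset.prod_congr rfl fun u _ => ?_
    rw [Finset.filter_union, Finset.prod_union (Finset.disjoint_filter_filter h)]
  rw [step A, step B]
  have t1 : (∏ u ∈ A, ∏ v ∈ B.filter (fun v => u < v), (q ^ v - q ^ u))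
      = ∏ b ∈ B, ∏ a ∈ A.filter (fun a => a < b), (q ^ b - q ^ a) := by
    simp only [Finset.prod_filter]
    exact Finset.prod_comm
  have t2 : (∏ b ∈ B, ∏ a ∈ A.filter (fun a => a < b), (q ^ b - q ^ a)) *
      (∏ u ∈ B, ∏ v ∈ A.filter (fun v => u < v), (q ^ v - q ^ u))
      = ∏ b ∈ B, ∏ a ∈ A, (q ^ (max a b) - q ^ (min a b)) := by
    rw [← Finset.prod_mul_distrib]
    refine Finset.prod_congr rfl fun b hb => ?_
    rw [← Finset.prod_filter_mul_prod_filter_not A (fun a => a < b)]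
    congr 1
    · refine Finset.prod_congr rfl fun a ha => ?_
      have ha' : a < b := (Finset.mem_filter.mp ha).2
      rw [max_eq_right (le_of_lt ha'), min_eq_left (le_of_lt ha')]
    · have hf : A.filter (fun a => ¬ a < b) = A.filter (fun a => b < a) := by
        ext x
        simp only [Finset.mem_filter]
        constructor
        · rintro ⟨hx, hx2⟩
          have : x ≠ b := fun e => Finset.disjoint_left.mp h hx (e ▸ hb)
          exact ⟨hx, by omega⟩
        · rintro ⟨hx, hx2⟩; exact ⟨hx, by omega⟩
      rw [hf]
      refine Finset.prod_congr rfl fun a ha => ?_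
      have ha' : b < a := (Finset.mem_filter.mp ha).2
      rw [max_eq_left (le_of_lt ha'), min_eq_right (le_of_lt ha')]
  rw [t1, ← t2]
  ring

lemma prod_erase_pairs (S : Finset ℕ) (g : ℕ → ℕ → ℝ)
    (hsym : ∀ i ∈ S, ∀ j ∈ S, g i j = g j i) :
    ∏ j ∈ S, ∏ i ∈ S.erase j, g i j
      = ∏ i ∈ S, ∏ j ∈ S.filter (fun j => i < j), (g i j) ^ 2 := by
  have e : ∀ j : ℕ, S.erase j = S.filter (fun i => i < j) ∪ S.filter (fun i => j < i) := by
    intro j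
    ext x
    simp only [Finset.mem_erase, Finset.mem_filter, Finset.mem_union]
    constructor
    · rintro ⟨hne, hx⟩
      rcases Nat.lt_or_ge x j with h | h
      · exact Or.inl ⟨hx, h⟩
      · exact Or.inr ⟨hx, by omega⟩
    · rintro (⟨hx, h⟩ | ⟨hx, h⟩) <;> exact ⟨by omega, hx⟩
  have hd : ∀ j : ℕ, Disjoint (S.filter (fun i => i < j)) (S.filter (fun i => j < i)) := by
    intro j
    simp only [Finset.disjoint_left, Finset.mem_filter]
    rintro x ⟨_, h1⟩ ⟨_, h2⟩; omega
  calc ∏ j ∈ S, ∏ i ∈ S.erase j, g i j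
      = ∏ j ∈ S, ((∏ i ∈ S.filter (fun i => i < j), g i j) *
          ∏ i ∈ S.filter (fun i => j < i), g i j) := by
        refine Finset.prod_congr rfl fun j _ => ?_
        rw [e j, Finset.prod_union (hd j)]
    _ = (∏ j ∈ S, ∏ i ∈ S.filter (fun i => i < j), g i j) *
        ∏ j ∈ S, ∏ i ∈ S.filter (fun i => j < i), g i j := Finset.prod_mul_distrib
    _ = (∏ j ∈ S, ∏ i ∈ S.filter (fun i => i < j), g i j) *
        ∏ j ∈ S, ∏ i ∈ S.filter (fun i => i < j), g j i := by
        congr 1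
        simp only [Finset.prod_filter]
        exact Finset.prod_comm
    _ = ∏ j ∈ S, ∏ i ∈ S.filter (fun i => i < j), (g i j * g j i) := by
        rw [← Finset.prod_mul_distrib]
        exact Finset.prod_congr rfl fun j _ => (Finset.prod_mul_distrib).symm
    _ = ∏ j ∈ S, ∏ i ∈ S.filter (fun i => i < j), (g i j) ^ 2 := by
        refine Finset.prod_congr rfl fun j hj => Finset.prod_congr rfl fun i hi => ?_
        have hi' := Finset.mem_filter.mp hi
        rw [hsym i hi'.1 j hj]
        ring
    _ = ∏ i ∈ S, ∏ j ∈ S.filter (fun j => i < j), (g i j) ^ 2 := by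
        simp only [Finset.prod_filter]
        exact Finset.prod_comm

theorem triangle_product_odd_case (m s : ℕ) (hm : 1 ≤ m)
    (k : ℕ → ℕ)
    (hk : ∀ i ∈ Finset.Icc 1 s, 1 ≤ k i ∧ k i ≤ m + s)
    (hkmono : ∀ i ∈ Finset.Icc 1 s, ∀ j ∈ Finset.Icc 1 s, i < j → k i < k j)
    (q : ℝ) (hq0 : 0 < q) (hq1 : q < 1) :
    vand q (((Finset.Icc 1 (m + s)).image (fun i => 2 * i)) \
        ((Finset.Icc 1 s).image (fun i => 2 * k i))) *
      vand q (((Finset.Icc 1 (m + s + 1)).image (fun i => 2 * i - 1)) ∪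
        ((Finset.Icc 1 s).image (fun i => 2 * k i)))
      = vand q ((Finset.Icc 1 (m + s)).image (fun i => 2 * i)) *
        vand q ((Finset.Icc 1 (m + s + 1)).image (fun i => 2 * i - 1)) *
        (∏ i ∈ Finset.Icc 1 s, ∏ j ∈ (Finset.Icc 1 s).filter (fun j => i < j),
          (q ^ (2 * k j) - q ^ (2 * k i)) ^ 2) *
        ∏ i ∈ Finset.Icc 1 s,
          q ^ (3 * k i) * (q - 1) ^ 2 * qPoch (q ^ 3) (q ^ 2) (k i - 1) *
            qPoch (q ^ 3) (q ^ 2) (m + s - k i) /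
            (qPoch (q ^ 2) (q ^ 2) (k i - 1) * qPoch (q ^ 2) (q ^ 2) (m + s - k i)) := by
  set Eset := (Finset.Icc 1 (m + s)).image (fun i => 2 * i) with hEdef
  set Kset := (Finset.Icc 1 s).image (fun i => 2 * k i) with hKdef
  set Oset := (Finset.Icc 1 (m + s + 1)).image (fun i => 2 * i - 1) with hOdef
  have hinjk : ∀ x ∈ Finset.Icc 1 s, ∀ y ∈ Finset.Icc 1 s, 2 * k x = 2 * k y → x = y := by
    intro x hx y hy hxy
    rcases lt_trichotomy x y with h | h | h
    · exact absurd (hkmono x hx y hy h) (by omega)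
    · exact h
    · exact absurd (hkmono y hy x hx h) (by omega)
  have hKE : Kset ⊆ Eset := by
    intro x hx
    rw [hKdef, Finset.mem_image] at hx
    obtain ⟨i, hi, rfl⟩ := hx
    rw [hEdef, Finset.mem_image]
    exact ⟨k i, Finset.mem_Icc.mpr ⟨(hk i hi).1, (hk i hi).2⟩, rfl⟩
  have h2kK : ∀ j ∈ Finset.Icc 1 s, 2 * k j ∈ Kset := by
    intro j hj
    rw [hKdef, Finset.mem_image]
    exact ⟨j, hj, rfl⟩
  have hOK : Disjoint Oset Kset := by
    rw [Finset.disjoint_left]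
    intro x hx hx'
    rw [hOdef, Finset.mem_image] at hx
    rw [hKdef, Finset.mem_image] at hx'
    obtain ⟨i, hi, rfl⟩ := hx
    obtain ⟨j, hj, hji⟩ := hx'
    have := Finset.mem_Icc.mp hi
    omega
  have hCK : Disjoint (Eset \ Kset) Kset := Finset.sdiff_disjoint
  have hEunion : (Eset \ Kset) ∪ Kset = Eset := Finset.sdiff_union_of_subset hKE
  -- the main cross identity
  have hper : ∀ j ∈ Finset.Icc 1 s,
      (∏ a ∈ Oset, (q ^ (max a (2 * k j)) - q ^ (min a (2 * k j))))
      = (∏ a ∈ Eset \ Kset, (q ^ (max a (2 * k j)) - q ^ (min a (2 * k j)))) *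
        (∏ i ∈ (Finset.Icc 1 s).erase j,
          (q ^ (max (2 * k i) (2 * k j)) - q ^ (min (2 * k i) (2 * k j)))) *
        (q ^ (3 * k j) * (q - 1) ^ 2 * qPoch (q ^ 3) (q ^ 2) (k j - 1) *
          qPoch (q ^ 3) (q ^ 2) (m + s - k j) /
          (qPoch (q ^ 2) (q ^ 2) (k j - 1) * qPoch (q ^ 2) (q ^ 2) (m + s - k j))) := by
    intro j hj
    have hk1 : 1 ≤ k j := (hk j hj).1
    have hkn : k j ≤ m + s := (hk j hj).2
    have h1 : (∏ a ∈ Oset, (q ^ (max a (2 * k j)) - q ^ (min a (2 * k j))))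
        = (-1) ^ (m + s + 1) * q ^ ((k j) ^ 2 + 2 * (k j) * (m + s + 1 - k j)) *
          (qPoch q (q ^ 2) (k j) * qPoch q (q ^ 2) (m + s + 1 - k j)) := by
      rw [hOdef]; exact key1 q (m + s) (k j) hk1 hkn
    have h2 := key2 q (m + s) (k j) hk1 hkn
    have h3 := alg q hq0 hq1 (m + s) (k j) hk1 hkn
    have hEsplit : Eset.erase (2 * k j) = (Eset \ Kset) ∪ (Kset.erase (2 * k j)) := by
      ext x
      simp only [Finset.mem_erase, Finset.mem_sdiff, Finset.mem_union]
      constructor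
      · rintro ⟨hne, hxE⟩
        by_cases hxK : x ∈ Kset
        · exact Or.inr ⟨hne, hxK⟩
        · exact Or.inl ⟨hxE, hxK⟩
      · rintro (⟨hxE, hxK⟩ | ⟨hne, hxK⟩)
        · exact ⟨fun e => hxK (e ▸ h2kK j hj), hxE⟩
        · exact ⟨hne, hKE hxK⟩
    have hd : Disjoint (Eset \ Kset) (Kset.erase (2 * k j)) :=
      Finset.sdiff_disjoint.mono_right (Finset.erase_subset _ _)
    have hKer : Kset.erase (2 * k j) = ((Finset.Icc 1 s).erase j).image (fun i => 2 * k i) := by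
      ext x
      simp only [hKdef, Finset.mem_erase, Finset.mem_image]
      constructor
      · rintro ⟨hne, i, hi, rfl⟩
        exact ⟨i, ⟨fun e => hne (by rw [e]), hi⟩, rfl⟩
      · rintro ⟨i, ⟨hij, hi⟩, rfl⟩
        exact ⟨fun e => hij (hinjk i hi j hj e), i, hi, rfl⟩
    have h4 : (∏ u ∈ Eset.erase (2 * k j),
        (q ^ (max u (2 * k j)) - q ^ (min u (2 * k j))))
        = (∏ a ∈ Eset \ Kset, (q ^ (max a (2 * k j)) - q ^ (min a (2 * k j)))) *
          (∏ i ∈ (Finset.Icc 1 s).erase j,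
            (q ^ (max (2 * k i) (2 * k j)) - q ^ (min (2 * k i) (2 * k j)))) := by
      rw [hEsplit, Finset.prod_union hd]
      congr 1
      rw [hKer, Finset.prod_image]
      intro x hx y hy hxy
      exact hinjk x (Finset.mem_of_mem_erase hx) y (Finset.mem_of_mem_erase hy) hxy
    have h2' : (∏ u ∈ Eset.erase (2 * k j),
        (q ^ (max u (2 * k j)) - q ^ (min u (2 * k j))))
        = (-1) ^ (m + s - 1) * q ^ (k j * (k j - 1) + 2 * k j * (m + s - k j)) *
          (qPoch (q ^ 2) (q ^ 2) (k j - 1) * qPoch (q ^ 2) (q ^ 2) (m + s - k j)) := by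
      rw [hEdef]; exact h2
    rw [h1, h3, ← h2', h4]
  -- assemble
  have hcross : (∏ b ∈ Kset, ∏ a ∈ Oset, (q ^ (max a b) - q ^ (min a b)))
      = (∏ b ∈ Kset, ∏ a ∈ Eset \ Kset, (q ^ (max a b) - q ^ (min a b))) *
        (∏ i ∈ Finset.Icc 1 s, ∏ j ∈ (Finset.Icc 1 s).filter (fun j => i < j),
          (q ^ (2 * k j) - q ^ (2 * k i)) ^ 2) *
        ∏ i ∈ Finset.Icc 1 s,
          q ^ (3 * k i) * (q - 1) ^ 2 * qPoch (q ^ 3) (q ^ 2) (k i - 1) *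
            qPoch (q ^ 3) (q ^ 2) (m + s - k i) /
            (qPoch (q ^ 2) (q ^ 2) (k i - 1) * qPoch (q ^ 2) (q ^ 2) (m + s - k i)) := by
    rw [hKdef, Finset.prod_image hinjk, Finset.prod_image hinjk]
    calc ∏ j ∈ Finset.Icc 1 s, ∏ a ∈ Oset, (q ^ (max a (2 * k j)) - q ^ (min a (2 * k j)))
        = ∏ j ∈ Finset.Icc 1 s,
            ((∏ a ∈ Eset \ Kset, (q ^ (max a (2 * k j)) - q ^ (min a (2 * k j)))) *
            (∏ i ∈ (Finset.Icc 1 s).erase j,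
              (q ^ (max (2 * k i) (2 * k j)) - q ^ (min (2 * k i) (2 * k j)))) *
            (q ^ (3 * k j) * (q - 1) ^ 2 * qPoch (q ^ 3) (q ^ 2) (k j - 1) *
              qPoch (q ^ 3) (q ^ 2) (m + s - k j) /
              (qPoch (q ^ 2) (q ^ 2) (k j - 1) * qPoch (q ^ 2) (q ^ 2) (m + s - k j)))) :=
          Finset.prod_congr rfl hper
      _ = (∏ j ∈ Finset.Icc 1 s, ∏ a ∈ Eset \ Kset,
            (q ^ (max a (2 * k j)) - q ^ (min a (2 * k j)))) *
          (∏ j ∈ Finset.Icc 1 s, ∏ i ∈ (Finset.Icc 1 s).erase j,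
            (q ^ (max (2 * k i) (2 * k j)) - q ^ (min (2 * k i) (2 * k j)))) *
          ∏ j ∈ Finset.Icc 1 s,
            (q ^ (3 * k j) * (q - 1) ^ 2 * qPoch (q ^ 3) (q ^ 2) (k j - 1) *
              qPoch (q ^ 3) (q ^ 2) (m + s - k j) /
              (qPoch (q ^ 2) (q ^ 2) (k j - 1) * qPoch (q ^ 2) (q ^ 2) (m + s - k j))) := by
          rw [Finset.prod_mul_distrib, Finset.prod_mul_distrib]
      _ = _ := by
          congr 1
          congr 1
          rw [prod_erase_pairs (Finset.Icc 1 s)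
            (fun i j => q ^ (max (2 * k i) (2 * k j)) - q ^ (min (2 * k i) (2 * k j)))
            (fun i _ j _ => by rw [max_comm, min_comm])]
          refine Finset.prod_congr rfl fun i hi => Finset.prod_congr rfl fun j hj => ?_
          have hj' := Finset.mem_filter.mp hj
          have hij : k i < k j := hkmono i hi j hj'.1 hj'.2
          have h1 : max (2 * k i) (2 * k j) = 2 * k j := by omega
          have h2 : min (2 * k i) (2 * k j) = 2 * k i := by omega
          rw [h1, h2]
  have hDv : vand q (Oset ∪ Kset) = vand q Oset * vand q Kset *
      ∏ b ∈ Kset, ∏ a ∈ Oset, (q ^ (max a b) - q ^ (min a b)) := vand_union q Oset Kset hOK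
  have hEv : vand q Eset = vand q (Eset \ Kset) * vand q Kset *
      ∏ b ∈ Kset, ∏ a ∈ Eset \ Kset, (q ^ (max a b) - q ^ (min a b)) := by
    conv_lhs => rw [← hEunion]
    exact vand_union q (Eset \ Kset) Kset hCK
  rw [hDv, hEv, hcross]
  ring
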